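/- First-order lower bound for the log-SINR term: For complex numbers a, a₀ and real numbers b, b₀ with |a|² < b and |a₀|² < b₀, it holds that ln(b/(b−|a|²)) ≥ ln(b₀/(b₀−|a₀|²)) + 2·Re(conj(a₀)·(a − a₀))/(b₀ − |a₀|²) − (|a₀|²/(b₀·(b₀ − |a₀|²)))·(b − b₀), with equality when (a, b) = (a₀, b₀). -/

import Mathlib

private lemma log_sinr_aux (u u₀ R b b₀ : ℝ) (hb : 0 < b) (hb₀ : 0 < b₀)
    (hd : 0 < b - u) (hd₀ : 0 < b₀ - u₀)
    (hkey : 2 * b₀ * b * (R + u₀) ≤ b₀ ^ 2 * u + b ^ 2 * u₀) :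
    2 * R / (b₀ - u₀) - (u₀ / (b₀ * (b₀ - u₀))) * (b - b₀)
      ≤ 1 - (b₀ / (b₀ - u₀)) / (b / (b - u)) := by
  have e : (b₀ / (b₀ - u₀)) / (b / (b - u)) = (b₀ * (b - u)) / ((b₀ - u₀) * b) := by
    field_simp
  have key2 : (1 - b₀ * (b - u) / ((b₀ - u₀) * b))
        - (2 * R / (b₀ - u₀) - u₀ / (b₀ * (b₀ - u₀)) * (b - b₀))
      = (b₀ ^ 2 * u + b ^ 2 * u₀ - 2 * b₀ * b * (R + u₀)) / ((b₀ - u₀) * b * b₀) := by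
    field_simp
    ring
  rw [e, ← sub_nonneg, key2]
  exact div_nonneg (by linarith) (by positivity)

/-- First-order lower bound for the log-SINR term: for complex `a, a₀` and
real `b, b₀` with `|a|² < b` and `|a₀|² < b₀`,
`ln(b/(b−|a|²)) ≥ ln(b₀/(b₀−|a₀|²)) + 2·Re(conj(a₀)(a−a₀))/(b₀−|a₀|²)
  − (|a₀|²/(b₀(b₀−|a₀|²)))·(b−b₀)`, with equality when `(a,b) = (a₀,b₀)`. -/
theorem log_sinr_first_order_lower_bound
    (a a₀ : ℂ) (b b₀ : ℝ)
    (ha : ‖a‖ ^ 2 < b) (ha₀ : ‖a₀‖ ^ 2 < b₀) :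
    Real.log (b₀ / (b₀ - ‖a₀‖ ^ 2))
        + 2 * ((starRingEnd ℂ) a₀ * (a - a₀)).re / (b₀ - ‖a₀‖ ^ 2)
        - (‖a₀‖ ^ 2 / (b₀ * (b₀ - ‖a₀‖ ^ 2))) * (b - b₀)
      ≤ Real.log (b / (b - ‖a‖ ^ 2)) ∧
    (a = a₀ → b = b₀ →
      Real.log (b / (b - ‖a‖ ^ 2))
        = Real.log (b₀ / (b₀ - ‖a₀‖ ^ 2))
          + 2 * ((starRingEnd ℂ) a₀ * (a - a₀)).re / (b₀ - ‖a₀‖ ^ 2)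
          - (‖a₀‖ ^ 2 / (b₀ * (b₀ - ‖a₀‖ ^ 2))) * (b - b₀)) := by
  have hb : 0 < b := (sq_nonneg ‖a‖).trans_lt ha
  have hb₀ : 0 < b₀ := (sq_nonneg ‖a₀‖).trans_lt ha₀
  have hd : 0 < b - ‖a‖ ^ 2 := sub_pos.2 ha
  have hd₀ : 0 < b₀ - ‖a₀‖ ^ 2 := sub_pos.2 ha₀
  have h1 : ((starRingEnd ℂ) a₀ * (a - a₀)).re
      = a₀.re * (a.re - a₀.re) + a₀.im * (a.im - a₀.im) := by
    simp [Complex.mul_re, Complex.sub_re, Complex.sub_im]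
  have h2 : ‖a‖ ^ 2 = a.re ^ 2 + a.im ^ 2 := by
    rw [Complex.sq_norm, Complex.normSq_apply]; ring
  have h3 : ‖a₀‖ ^ 2 = a₀.re ^ 2 + a₀.im ^ 2 := by
    rw [Complex.sq_norm, Complex.normSq_apply]; ring
  have hkey : 2 * b₀ * b * (((starRingEnd ℂ) a₀ * (a - a₀)).re + ‖a₀‖ ^ 2)
      ≤ b₀ ^ 2 * ‖a‖ ^ 2 + b ^ 2 * ‖a₀‖ ^ 2 := by
    rw [h1, h2, h3]
    nlinarith [sq_nonneg (b₀ * a.re - b * a₀.re), sq_nonneg (b₀ * a.im - b * a₀.im)]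
  constructor
  · have hx : (0:ℝ) < b / (b - ‖a‖ ^ 2) := by positivity
    have hx₀ : (0:ℝ) < b₀ / (b₀ - ‖a₀‖ ^ 2) := by positivity
    have hlog := Real.log_le_sub_one_of_pos (div_pos hx₀ hx)
    rw [Real.log_div hx₀.ne' hx.ne'] at hlog
    have halg := log_sinr_aux (‖a‖ ^ 2) (‖a₀‖ ^ 2)
      (((starRingEnd ℂ) a₀ * (a - a₀)).re) b b₀ hb hb₀ hd hd₀ hkey
    linarith
  · rintro rfl rfl
    simp
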